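/- Let A = (Q, Σ, δ) be a PFA that is one-cluster with respect to a letter a, let C be the vertex set of the a-cycle, and suppose that a is the only letter of Σ defined at every state (i.e., for every letter x ≠ a there is a state q with δ(q, x) undefined). If A is carefully synchronizing and |C| > 1, then there exists a letter b ∈ Σ with b ≠ a such that δ(q, b) is defined for every q ∈ C. -/

import Mathlib

namespace PaperSync

variable {Q A : Type*}

/-- The extension of a partial transition function `δ : Q → A → Option Q` to words. -/
def wordMap (δ : Q → A → Option Q) : Q → List A → Option Q
  | q, [] => some q
  | q, x :: w => (δ q x).bind fun q' => wordMap δ q' w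

/-- A word `w` carefully synchronizes the PFA `δ`:
`δ(q, w)` is defined for every state and all values agree. -/
def CarefullySync (δ : Q → A → Option Q) (w : List A) : Prop :=
  ∃ qbar : Q, ∀ q : Q, wordMap δ q w = some qbar

open Classical in
/-- The image of a set of states under a word: defined iff `δ(q,w)` is defined
for all `q ∈ S`, in which case it is `{δ(q,w) : q ∈ S}`. -/
noncomputable def setImage (δ : Q → A → Option Q) (S : Set Q) (w : List A) :
    Option (Set Q) :=
  if ∀ q ∈ S, (wordMap δ q w).isSome then
    some {q' | ∃ q ∈ S, wordMap δ q w = some q'}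
  else none

/-- A PFA is one-cluster with respect to a letter `a`: `a` is defined at every
state and the functional digraph `G_a` of `a` has exactly one weakly connected
component. -/
def OneCluster (δ : Q → A → Option Q) (a : A) : Prop :=
  (∀ q : Q, (δ q a).isSome) ∧
  ∀ p q : Q, Relation.EqvGen (fun u v => δ u a = some v) p q

/-- The vertex set of the `a`-cycle: states returning to themselves under some
positive power of `a`. -/
def cycleSet (δ : Q → A → Option Q) (a : A) : Set Q :=
  {q | ∃ k : ℕ, 1 ≤ k ∧ wordMap δ q (List.replicate k a) = some q}

/-- The level of a state: the least `k` with `δ(q, a^k)` on the `a`-cycle. -/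
noncomputable def levelOf (δ : Q → A → Option Q) (a : A) (q : Q) : ℕ :=
  sInf {k | ∃ p ∈ cycleSet δ a, wordMap δ q (List.replicate k a) = some p}

/-- The level of `G_a`: the maximal level of a state. -/
noncomputable def levelG [Fintype Q] (δ : Q → A → Option Q) (a : A) : ℕ :=
  Finset.univ.sup (levelOf δ a)

lemma wordMap_append (δ : Q → A → Option Q) (q : Q) (u v : List A) :
    wordMap δ q (u ++ v) = (wordMap δ q u).bind (fun p => wordMap δ p v) := by
  induction u generalizing q with
  | nil => simp [wordMap]
  | cons x u ih =>
    simp only [List.cons_append, wordMap]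
    cases δ q x <;> simp [ih]

lemma step_mem (δ : Q → A → Option Q) (a : A) {q q' : Q}
    (hq : q ∈ cycleSet δ a) (h : δ q a = some q') : q' ∈ cycleSet δ a := by
  obtain ⟨k, hk, hqk⟩ := hq
  refine ⟨k, hk, ?_⟩
  have h1 : wordMap δ q (List.replicate (k + 1) a) = some q' := by
    rw [List.replicate_succ', wordMap_append, hqk]
    simp [wordMap, h]
  have h2 : wordMap δ q (List.replicate (k + 1) a)
      = wordMap δ q' (List.replicate k a) := by
    rw [List.replicate_succ]
    simp [wordMap, h]
  rw [← h2, h1]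

lemma word_mem (δ : Q → A → Option Q) (a : A) (m : ℕ) {q p : Q}
    (hq : q ∈ cycleSet δ a)
    (h : wordMap δ q (List.replicate m a) = some p) : p ∈ cycleSet δ a := by
  induction m generalizing q with
  | zero =>
    simp only [List.replicate_zero, wordMap, Option.some_inj] at h
    exact h ▸ hq
  | succ m ih =>
    rw [List.replicate_succ] at h
    simp only [wordMap] at h
    obtain ⟨q', hq', h'⟩ := Option.bind_eq_some_iff.mp h
    exact ih (step_mem δ a hq hq') h'

lemma surj_step (δ : Q → A → Option Q) (a : A) {q : Q} (hq : q ∈ cycleSet δ a) :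
    ∃ p ∈ cycleSet δ a, δ p a = some q := by
  obtain ⟨k, hk, hqk⟩ := hq.imp (fun k hk => hk)
  obtain ⟨k', rfl⟩ : ∃ k', k = k' + 1 := ⟨k - 1, by omega⟩
  rw [List.replicate_succ', wordMap_append] at hqk
  obtain ⟨p, hp1, hp2⟩ := Option.bind_eq_some_iff.mp hqk
  refine ⟨p, word_mem δ a k' hq hp1, ?_⟩
  simpa [wordMap] using hp2

lemma surj_word (δ : Q → A → Option Q) (a : A) (m : ℕ) {q : Q}
    (hq : q ∈ cycleSet δ a) :
    ∃ p ∈ cycleSet δ a, wordMap δ p (List.replicate m a) = some q := by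
  induction m with
  | zero => exact ⟨q, hq, rfl⟩
  | succ m ih =>
    obtain ⟨p, hp, hpq⟩ := ih
    obtain ⟨r, hr, hra⟩ := surj_step δ a hp
    refine ⟨r, hr, ?_⟩
    rw [List.replicate_succ]
    simp [wordMap, hra, hpq]

lemma decomp (a : A) (w : List A) :
    (∃ m, w = List.replicate m a) ∨
      ∃ m b w', b ≠ a ∧ w = List.replicate m a ++ b :: w' := by
  induction w with
  | nil => exact Or.inl ⟨0, rfl⟩
  | cons x w ih =>
    by_cases hx : x = a
    · subst hx
      rcases ih with ⟨m, rfl⟩ | ⟨m, b, w', hb, rfl⟩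
      · exact Or.inl ⟨m + 1, (List.replicate_succ ..).symm⟩
      · exact Or.inr ⟨m + 1, b, w', hb, by rw [List.replicate_succ]; rfl⟩
    · exact Or.inr ⟨0, x, w, hx, rfl⟩

/-- if a one-cluster PFA, whose cluster letter `a` is the only
letter defined at every state, is carefully synchronizing and its `a`-cycle `C`
has more than one state, then some letter `b ≠ a` is defined at every state of
`C`. -/
theorem cluster_letter_defined
    {Q A : Type*} [Fintype Q] [Fintype A] (δ : Q → A → Option Q) (a : A)
    (hcluster : OneCluster δ a)
    (honly : ∀ x : A, x ≠ a → ∃ q : Q, δ q x = none)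
    (hsync : ∃ w : List A, CarefullySync δ w)
    (hC : 1 < (cycleSet δ a).ncard) :
    ∃ b : A, b ≠ a ∧ ∀ q ∈ cycleSet δ a, (δ q b).isSome := by
  obtain ⟨w, qbar, hw⟩ := hsync
  rcases decomp a w with ⟨m, rfl⟩ | ⟨m, b, w', hb, rfl⟩
  · exfalso
    have hsub : cycleSet δ a ⊆ {qbar} := by
      intro q hq
      obtain ⟨p, hp, hpq⟩ := surj_word δ a m hq
      have h := hw p
      rw [hpq] at h
      simpa using h
    have := Set.ncard_le_ncard hsub (Set.finite_singleton qbar)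
    rw [Set.ncard_singleton] at this
    omega
  · refine ⟨b, hb, fun p hp => ?_⟩
    obtain ⟨q, hq, hqp⟩ := surj_word δ a m hp
    have h := hw q
    rw [wordMap_append, hqp] at h
    simp only [Option.bind_some, wordMap] at h
    obtain ⟨r, hr, _⟩ := Option.bind_eq_some_iff.mp h
    simp [hr]

end PaperSync
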